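/- Fix δ ∈ ℂ not a root of unity and a₀₁, b₁₀, a₂₀ ∈ ℂ. Define sequences by a₁₀^(n) = n, a₀₁^(n) = (1−δⁿ)a₀₁/(1−δ), b₁₀^(n) = (1−δⁿ)b₁₀/(δ^{n−1}(1−δ)), a₂₀^(n) = n(n−1) + n·a₂₀ + (δ/(1−δ))·(n−1 − δ(1−δ^{n−1})/(1−δ))·a₀₁·b₁₀. Then for all n ≥ 1, θ^(n) := ((1−δⁿ)·a₂₀^(n) + δⁿ·a₀₁^(n)·b₁₀^(n)) / (a₁₀^(n))² equals (1−δⁿ)((n−1)(1−δ) + θ)/(n(1−δ)), where θ := (1−δ)a₂₀ + δ·a₀₁·b₁₀. -/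
import Mathlib
set_option maxHeartbeats 1000000


/-- The algebraic identity θ^(n) = (1−δⁿ)((n−1)(1−δ) + θ)/(n(1−δ)) for the
closed-form coefficient sequences of the iterates, where
θ = (1−δ)a₂₀ + δ·a₀₁·b₁₀. -/
theorem stmt10 (δ a01 b10 a20 : ℂ) (hδ0 : δ ≠ 0)
    (hδ : ∀ k : ℕ, 0 < k → δ ^ k ≠ 1) (n : ℕ) (hn : 1 ≤ n) :
    ((1 - δ ^ n) *
        ((n : ℂ) * ((n : ℂ) - 1) + (n : ℂ) * a20 +
          (δ / (1 - δ)) * (((n : ℂ) - 1) - δ * (1 - δ ^ (n - 1)) / (1 - δ)) *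
            a01 * b10) +
      δ ^ n * ((1 - δ ^ n) * a01 / (1 - δ)) *
        ((1 - δ ^ n) * b10 / (δ ^ (n - 1) * (1 - δ)))) / ((n : ℂ)) ^ 2 =
    (1 - δ ^ n) * (((n : ℂ) - 1) * (1 - δ) + ((1 - δ) * a20 + δ * a01 * b10)) /
      ((n : ℂ) * (1 - δ)) := by
  obtain ⟨m, rfl⟩ := Nat.exists_eq_add_of_le hn
  have h1 : (1 : ℂ) - δ ≠ 0 := by
    have := hδ 1 one_pos
    simpa [sub_ne_zero] using (Ne.symm (by simpa using this))
  have hm : (δ : ℂ) ^ m ≠ 0 := pow_ne_zero _ hδ0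
  have hn' : ((1 + m : ℕ) : ℂ) ≠ 0 := by
    exact Nat.cast_ne_zero.mpr (by omega)
  push_cast
  have e1 : (1 + m) - 1 = m := by omega
  rw [e1, pow_add, pow_one]
  have h2 : ((1:ℂ) + (m:ℂ)) ^ 2 ≠ 0 := pow_ne_zero _ (by push_cast at hn' ⊢; exact hn')
  have h3 : ((1:ℂ) + (m:ℂ)) * (1 - δ) ≠ 0 := mul_ne_zero (by push_cast at hn' ⊢; exact hn') h1
  rw [div_eq_div_iff h2 h3]
  field_simp
  ring
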